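/- For all nonempty finite subsets F, F' of ℝ^d and any direction u, if the X-rays of F and F' in direction u are equal, then the centroids of F and F' lie on a common line parallel to u, i.e., centroid(F) - centroid(F') is a scalar multiple of u. -/

import Mathlib

open scoped Classical

/-- If two nonempty finite sets in `ℝ^d` have the same X-ray in direction `u`,
then their centroids lie on a common line parallel to `u`. -/
theorem xray_centroid (d : ℕ) (u : EuclideanSpace ℝ (Fin d)) (hu : ‖u‖ = 1)
    (F F' : Finset (EuclideanSpace ℝ (Fin d))) (hF : F.Nonempty) (hF' : F'.Nonempty)
    (h : ∀ z : EuclideanSpace ℝ (Fin d),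
      (F.filter fun x => ∃ t : ℝ, x = z + t • u).card =
      (F'.filter fun x => ∃ t : ℝ, x = z + t • u).card) :
    ∃ c : ℝ,
      (F.card : ℝ)⁻¹ • (∑ x ∈ F, x) - (F'.card : ℝ)⁻¹ • (∑ x ∈ F', x) = c • u := by
  have huu : (inner ℝ u u : ℝ) = 1 := by
    rw [real_inner_self_eq_norm_sq, hu]; norm_num
  set f : EuclideanSpace ℝ (Fin d) → EuclideanSpace ℝ (Fin d) :=
    fun x => x - (inner ℝ u x : ℝ) • u with hf
  have hiff : ∀ z x : EuclideanSpace ℝ (Fin d),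
      (∃ t : ℝ, x = z + t • u) ↔ f x = f z := by
    intro z x
    constructor
    · rintro ⟨t, rfl⟩
      simp only [hf, inner_add_right, inner_smul_right, huu, mul_one, add_smul]
      abel
    · intro hfx
      refine ⟨(inner ℝ u x : ℝ) - (inner ℝ u z : ℝ), ?_⟩
      have h2 : x - (inner ℝ u x : ℝ) • u = z - (inner ℝ u z : ℝ) • u := hfx
      have h3 : x = z - (inner ℝ u z : ℝ) • u + (inner ℝ u x : ℝ) • u :=
        eq_add_of_sub_eq h2
      rw [sub_smul]
      conv_lhs => rw [h3]
      abel
  have key : ∀ z : EuclideanSpace ℝ (Fin d),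
      (F.filter fun x => f x = f z).card = (F'.filter fun x => f x = f z).card := by
    intro z
    have hz := h z
    simp only [hiff z] at hz
    exact hz
  have himg : F.image f = F'.image f := by
    ext v
    simp only [Finset.mem_image]
    constructor
    · rintro ⟨x, hx, rfl⟩
      have hc := key x
      have hpos : 0 < (F.filter fun a => f a = f x).card :=
        Finset.card_pos.2 ⟨x, Finset.mem_filter.2 ⟨hx, rfl⟩⟩
      rw [hc] at hpos
      obtain ⟨y, hy⟩ := Finset.card_pos.1 hpos
      obtain ⟨hy1, hy2⟩ := Finset.mem_filter.1 hy
      exact ⟨y, hy1, hy2⟩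
    · rintro ⟨x, hx, rfl⟩
      have hc := key x
      have hpos : 0 < (F'.filter fun a => f a = f x).card :=
        Finset.card_pos.2 ⟨x, Finset.mem_filter.2 ⟨hx, rfl⟩⟩
      rw [← hc] at hpos
      obtain ⟨y, hy⟩ := Finset.card_pos.1 hpos
      obtain ⟨hy1, hy2⟩ := Finset.mem_filter.1 hy
      exact ⟨y, hy1, hy2⟩
  have hcard : F.card = F'.card := by
    rw [Finset.card_eq_sum_card_image f F, Finset.card_eq_sum_card_image f F', himg]
    refine Finset.sum_congr rfl fun b hb => ?_
    rw [← himg] at hb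
    obtain ⟨z, hz, rfl⟩ := Finset.mem_image.1 hb
    exact key z
  have hsumf : ∑ x ∈ F, f x = ∑ x ∈ F', f x := by
    have h1 : ∑ x ∈ F, id (f x) = ∑ b ∈ F.image f,
        (F.filter fun a => f a = b).card • id b := Finset.sum_comp id f
    have h2 : ∑ x ∈ F', id (f x) = ∑ b ∈ F'.image f,
        (F'.filter fun a => f a = b).card • id b := Finset.sum_comp id f
    simp only [id] at h1 h2
    rw [h1, h2, himg]
    refine Finset.sum_congr rfl fun b hb => ?_
    rw [← himg] at hb
    obtain ⟨z, hz, rfl⟩ := Finset.mem_image.1 hb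
    rw [key z]
  have hdecomp : ∀ s : Finset (EuclideanSpace ℝ (Fin d)), ∑ x ∈ s, x =
      (∑ x ∈ s, f x) + (∑ x ∈ s, (inner ℝ u x : ℝ)) • u := by
    intro s
    rw [Finset.sum_smul, ← Finset.sum_add_distrib]
    refine Finset.sum_congr rfl fun x _ => ?_
    simp [hf]
  refine ⟨(F.card : ℝ)⁻¹ * ((∑ x ∈ F, (inner ℝ u x : ℝ)) - (∑ x ∈ F', (inner ℝ u x : ℝ))), ?_⟩
  rw [hdecomp F, hdecomp F', hcard, hsumf]
  rw [smul_add, smul_add, mul_smul, sub_smul, smul_sub]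
  abel
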